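/- For every integer n ≥ 1, the piecewise function vol(t) defined by vol(t) = 9(2n+1)/(8n(4n+1)) − ((4n+1)/n)t² for 0 ≤ t ≤ 3/(4(4n+1)), vol(t) = (1/n)(3(2n+1)/(2(4n+1)) − t)² for 3/(4(4n+1)) ≤ t ≤ 3(2n+1)/(2(4n+1)), and vol(t) = 0 otherwise, satisfies (8n(4n+1)/(9(2n+1))) · ∫₀^∞ vol(t) dt = (4n+3)/(4(4n+1)). -/

import Mathlib

open MeasureTheory

theorem stmt_13 (n : ℕ) (hn : 1 ≤ n) :
    (8 * (n : ℝ) * (4 * n + 1) / (9 * (2 * n + 1))) *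
      ∫ t in Set.Ioi (0 : ℝ),
        (if 0 ≤ t ∧ t ≤ 3 / (4 * (4 * (n : ℝ) + 1)) then
            9 * (2 * (n : ℝ) + 1) / (8 * n * (4 * n + 1)) - ((4 * n + 1) / n) * t ^ 2
         else if 0 ≤ t ∧ t ≤ 3 * (2 * (n : ℝ) + 1) / (2 * (4 * n + 1)) then
            (1 / (n : ℝ)) * (3 * (2 * n + 1) / (2 * (4 * n + 1)) - t) ^ 2
         else 0)
      = (4 * n + 3) / (4 * (4 * n + 1)) := by
  have hN : (1:ℝ) ≤ (n:ℝ) := by exact_mod_cast hn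
  have hN0 : (0:ℝ) < (n:ℝ) := by linarith
  set N : ℝ := (n:ℝ) with hNdef
  have h41 : (0:ℝ) < 4 * N + 1 := by linarith
  set a : ℝ := 3 / (4 * (4 * N + 1)) with hadef
  set b : ℝ := 3 * (2 * N + 1) / (2 * (4 * N + 1)) with hbdef
  set C : ℝ := 9 * (2 * N + 1) / (8 * N * (4 * N + 1)) with hCdef
  set D : ℝ := (4 * N + 1) / N with hDdef
  have ha0 : 0 < a := by rw [hadef]; positivity
  have hab : a < b := by
    rw [hadef, hbdef, div_lt_div_iff₀ (by linarith) (by linarith)]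
    nlinarith
  set f : ℝ → ℝ := fun t =>
    if 0 ≤ t ∧ t ≤ a then C - D * t ^ 2
    else if 0 ≤ t ∧ t ≤ b then (1 / N) * (b - t) ^ 2
    else 0 with hfdef
  have h1 : ∀ t ∈ Set.Ioc (0:ℝ) a, f t = C - D * t ^ 2 := by
    intro t ht
    obtain ⟨ht1, ht2⟩ := ht
    simp [hfdef, ht1.le, ht2]
  have h2 : ∀ t ∈ Set.Ioc a b, f t = (1 / N) * (b - t) ^ 2 := by
    intro t ht
    obtain ⟨ht1, ht2⟩ := ht
    have hta : ¬ t ≤ a := not_le.mpr ht1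
    simp [hfdef, hta, ht2, (ha0.trans ht1).le]
  have h3 : ∀ t ∈ Set.Ioi b, f t = 0 := by
    intro t ht
    have htb : ¬ t ≤ b := not_le.mpr ht
    have hta : ¬ t ≤ a := not_le.mpr (hab.trans ht)
    simp [hfdef, hta, htb]
  have int1 : IntegrableOn (fun t => C - D * t ^ 2) (Set.Ioc (0:ℝ) a) := by
    apply Continuous.integrableOn_Ioc
    fun_prop
  have int2 : IntegrableOn (fun t => (1 / N) * (b - t) ^ 2) (Set.Ioc a b) := by
    apply Continuous.integrableOn_Ioc
    fun_prop
  have if1 : IntegrableOn f (Set.Ioc (0:ℝ) a) :=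
    int1.congr_fun (fun t ht => (h1 t ht).symm) measurableSet_Ioc
  have if2 : IntegrableOn f (Set.Ioc a b) :=
    int2.congr_fun (fun t ht => (h2 t ht).symm) measurableSet_Ioc
  have if3 : IntegrableOn f (Set.Ioi b) :=
    (integrableOn_zero).congr_fun (fun t ht => (h3 t ht).symm) measurableSet_Ioi
  have hsplit : ∫ t in Set.Ioi (0:ℝ), f t
      = (∫ t in Set.Ioc (0:ℝ) a, f t) + ((∫ t in Set.Ioc a b, f t)
        + ∫ t in Set.Ioi b, f t) := by
    rw [← setIntegral_union (Set.Ioc_disjoint_Ioi le_rfl) measurableSet_Ioi if2 if3,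
      Set.Ioc_union_Ioi_eq_Ioi hab.le,
      ← setIntegral_union (Set.Ioc_disjoint_Ioi le_rfl) measurableSet_Ioi if1
        (if2.union if3 |>.congr_set_ae (by rw [Set.Ioc_union_Ioi_eq_Ioi hab.le]; exact Filter.EventuallyEq.rfl)),
      Set.Ioc_union_Ioi_eq_Ioi ha0.le]
  have e1 : (∫ t in Set.Ioc (0:ℝ) a, f t) = C * a - D * (a ^ 3 / 3) := by
    rw [setIntegral_congr_fun measurableSet_Ioc h1,
      ← intervalIntegral.integral_of_le ha0.le,
      intervalIntegral.integral_sub intervalIntegrable_const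
        ((intervalIntegral.intervalIntegrable_pow 2).const_mul D),
      intervalIntegral.integral_const_mul, integral_pow]
    simp
    ring
  have e2 : (∫ t in Set.Ioc a b, f t) = (1 / N) * ((b - a) ^ 3 / 3) := by
    rw [setIntegral_congr_fun measurableSet_Ioc h2,
      ← intervalIntegral.integral_of_le hab.le]
    have : ∀ t : ℝ, (1 / N) * (b - t) ^ 2 = (fun x => (1 / N) * x ^ 2) (b - t) := by
      intro t; rfl
    rw [intervalIntegral.integral_congr (fun t _ => this t),
      intervalIntegral.integral_comp_sub_left (fun x => (1 / N) * x ^ 2) b,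
      sub_self, intervalIntegral.integral_const_mul, integral_pow]
    ring
  have e3 : (∫ t in Set.Ioi b, f t) = 0 := by
    rw [setIntegral_congr_fun measurableSet_Ioi h3]
    simp
  rw [hsplit, e1, e2, e3, hadef, hbdef, hCdef, hDdef]
  field_simp
  ring
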